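/- With P an n×n proximity matrix (unipotent lower triangular, off-diagonal entries 0 or -1, column -1 entries consecutive starting below the diagonal) and P^{-1} = (x_{i,j}), the rows of P^{-1} are nonnegative, and the point basis (bottom row of P^{-1}) satisfies the proximity inequalities: for each i, a_i ≥ Σ_{j : p_{j,i} = -1} a_j, with equality unless i = n where a_n = 1 + Σ_{j ≻ n} a_j (vacuously a_n = 1). -/

import Mathlib

theorem stmt_9 (n : ℕ) (hn : 0 < n) (P : Matrix (Fin n) (Fin n) ℤ)
    (hdiag : ∀ i, P i i = 1)
    (hupper : ∀ i j : Fin n, i < j → P i j = 0)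
    (hlower : ∀ i j : Fin n, j < i → P i j = 0 ∨ P i j = -1)
    (hcol : ∀ j : Fin n, ∃ k : Fin n, ∀ i : Fin n, P i j = -1 ↔ j < i ∧ i ≤ k) :
    (∀ i j : Fin n, 0 ≤ P⁻¹ i j) ∧
    (∀ i : Fin n,
      P⁻¹ ⟨n - 1, by omega⟩ i =
        (∑ j ∈ Finset.univ.filter (fun j : Fin n => P j i = -1), P⁻¹ ⟨n - 1, by omega⟩ j)
        + (if i = ⟨n - 1, by omega⟩ then 1 else 0)) := by
  set N : Matrix (Fin n) (Fin n) ℤ := 1 - P with hN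
  have hNentry : ∀ i j : Fin n, 0 ≤ N i j := by
    intro i j
    simp only [hN, Matrix.sub_apply, Matrix.one_apply]
    rcases lt_trichotomy i j with h | h | h
    · rw [hupper i j h, if_neg (ne_of_lt h)]; norm_num
    · subst h; rw [hdiag, if_pos rfl]; norm_num
    · rcases hlower i j h with h' | h' <;> rw [h', if_neg (ne_of_gt h)] <;> norm_num
  have hNlow : ∀ i j : Fin n, i ≤ j → N i j = 0 := by
    intro i j h
    simp only [hN, Matrix.sub_apply, Matrix.one_apply]
    rcases lt_or_eq_of_le h with h | h
    · rw [hupper i j h, if_neg (ne_of_lt h)]; ring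
    · subst h; rw [hdiag, if_pos rfl]; ring
  have hpow : ∀ k : ℕ, ∀ i j : Fin n, (i : ℕ) < (j : ℕ) + k → (N ^ k) i j = 0 := by
    intro k
    induction k with
    | zero =>
      intro i j h
      simp only [pow_zero, Matrix.one_apply]
      rw [if_neg]
      intro he; subst he; omega
    | succ k ih =>
      intro i j h
      rw [pow_succ', Matrix.mul_apply]
      apply Finset.sum_eq_zero
      intro l _
      rcases le_or_gt i l with hl | hl
      · rw [hNlow i l hl, zero_mul]
      · rw [ih l j (by omega), mul_zero]
  have hNn : N ^ n = 0 := by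
    ext i j
    rw [hpow n i j (by omega)]
    rfl
  set B : Matrix (Fin n) (Fin n) ℤ := ∑ k ∈ Finset.range n, N ^ k with hB
  have hBP : B * P = 1 := by
    have h1 : B * (N - 1) = N ^ n - 1 := geom_sum_mul N n
    have h2 : P = -(N - 1) := by rw [hN]; abel
    rw [h2, mul_neg, h1, hNn, zero_sub, neg_neg]
  have hinv : P⁻¹ = B := Matrix.inv_eq_left_inv hBP
  have hpownn : ∀ k : ℕ, ∀ i j : Fin n, 0 ≤ (N ^ k) i j := by
    intro k
    induction k with
    | zero =>
      intro i j
      simp only [pow_zero, Matrix.one_apply]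
      split <;> norm_num
    | succ k ih =>
      intro i j
      rw [pow_succ', Matrix.mul_apply]
      apply Finset.sum_nonneg
      intro l _
      exact mul_nonneg (hNentry i l) (ih l j)
  constructor
  · intro i j
    rw [hinv, hB, Matrix.sum_apply]
    exact Finset.sum_nonneg fun k _ => hpownn k i j
  · intro i
    have hPP : P⁻¹ * P = 1 := by rw [hinv]; exact hBP
    set r : Fin n := ⟨n - 1, by omega⟩ with hr
    have key := congrFun (congrFun hPP r) i
    rw [Matrix.mul_apply] at key
    have hdecomp : ∀ j : Fin n, P j i =
        (if j = i then 1 else 0) + (if P j i = -1 then -1 else 0) := by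
      intro j
      by_cases hji : j = i
      · subst hji
        rw [hdiag, if_pos rfl, if_neg (by norm_num)]; norm_num
      · rw [if_neg hji]
        by_cases hm : P j i = -1
        · rw [if_pos hm, hm]; norm_num
        · rw [if_neg hm]
          rcases lt_trichotomy j i with h | h | h
          · rw [hupper j i h]; norm_num
          · exact absurd h hji
          · rcases hlower j i h with h' | h'
            · rw [h']; norm_num
            · exact absurd h' hm
    have hsum : ∑ j, P⁻¹ r j * P j i =
        P⁻¹ r i - ∑ j ∈ Finset.univ.filter (fun j : Fin n => P j i = -1), P⁻¹ r j := by
      calc ∑ j, P⁻¹ r j * P j i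
          = ∑ j, (P⁻¹ r j * (if j = i then 1 else 0)
              + P⁻¹ r j * (if P j i = -1 then -1 else 0)) := by
            apply Finset.sum_congr rfl
            intro j _
            rw [← mul_add, ← hdecomp j]
        _ = (∑ j, P⁻¹ r j * (if j = i then 1 else 0))
            + ∑ j, P⁻¹ r j * (if P j i = -1 then -1 else 0) := Finset.sum_add_distrib
        _ = P⁻¹ r i + ∑ j, -(if P j i = -1 then P⁻¹ r j else 0) := by
            congr 1
            · simp [Finset.sum_ite_eq']
            · apply Finset.sum_congr rfl
              intro j _
              split <;> ring
        _ = P⁻¹ r i - ∑ j ∈ Finset.univ.filter (fun j : Fin n => P j i = -1), P⁻¹ r j := by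
            rw [Finset.sum_neg_distrib, Finset.sum_filter]
            ring
    rw [hsum, Matrix.one_apply] at key
    by_cases hir : i = r
    · rw [if_pos hir]
      rw [if_pos hir.symm] at key
      linarith
    · rw [if_neg hir]
      rw [if_neg (fun h => hir h.symm)] at key
      linarith
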